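/- For a signed partition η of ℕ whose positive and negative blocks are all infinite, the normalizer in S_ℕ of the signed Young subgroup Y_η equals the 'unsigned' Young subgroup ∏_i S⁺(B_i) (the group of finitely supported permutations preserving each block of η setwise); consequently N(N(Y_η)) = N(Y_η), i.e., the normalizer of Y_η is self-normalizing. -/

import Mathlib

/-- The support of a product is contained in the union of supports. -/
theorem supp_mul_subset (a b : Equiv.Perm ℕ) :
    {x | (a * b) x ≠ x} ⊆ {x | a x ≠ x} ∪ {x | b x ≠ x} := by
  intro x hx
  by_contra h
  simp only [Set.mem_union, Set.mem_setOf_eq, not_or, not_not] at h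
  exact hx (by simp [Equiv.Perm.mul_apply, h.2, h.1])

theorem supp_inv_eq (a : Equiv.Perm ℕ) : {x | a⁻¹ x ≠ x} = {x | a x ≠ x} := by
  ext x
  simp only [Set.mem_setOf_eq, ne_eq, Equiv.Perm.inv_eq_iff_eq]
  exact not_congr eq_comm

/-- `S⁺(B)`: the group of finitely supported permutations of `ℕ` whose support
is contained in `B`. -/
def Splus (B : Set ℕ) : Subgroup (Equiv.Perm ℕ) where
  carrier := {g | {x | g x ≠ x}.Finite ∧ ∀ x, g x ≠ x → x ∈ B}
  one_mem' := by simp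
  mul_mem' := by
    rintro a b ⟨ha1, ha2⟩ ⟨hb1, hb2⟩
    refine ⟨(ha1.union hb1).subset (supp_mul_subset a b), fun x hx => ?_⟩
    rcases supp_mul_subset a b hx with h | h
    · exact ha2 x h
    · exact hb2 x h
  inv_mem' := by
    rintro a ⟨ha1, ha2⟩
    constructor
    · rw [supp_inv_eq]
      exact ha1
    · intro x hx
      have hx' : x ∈ {x | a x ≠ x} :=
        supp_inv_eq a ▸ (hx : x ∈ {x | a⁻¹ x ≠ x})
      exact ha2 x hx'

/-- `S_ℕ`: the group of all finitely supported permutations of `ℕ`. -/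
def SN : Subgroup (Equiv.Perm ℕ) := Splus Set.univ

/-- `S⁻(B)`: the finitary alternating group on `B`, generated by the products of
two transpositions of elements of `B`. -/
def Sminus (B : Set ℕ) : Subgroup (Equiv.Perm ℕ) :=
  Subgroup.closure {g | ∃ a b c d : ℕ, a ∈ B ∧ b ∈ B ∧ c ∈ B ∧ d ∈ B ∧
    a ≠ b ∧ c ≠ d ∧ g = Equiv.swap a b * Equiv.swap c d}

/-- The signed Young subgroup `Y_η` associated to families `pos`, `neg` of blocks. -/
def Yyoung (pos neg : Set (Set ℕ)) : Subgroup (Equiv.Perm ℕ) :=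
  (⨆ B ∈ pos, Splus B) ⊔ (⨆ B ∈ neg, Sminus B)

theorem mem_Splus {B : Set ℕ} {g : Equiv.Perm ℕ} :
    g ∈ Splus B ↔ {x | g x ≠ x}.Finite ∧ ∀ x, g x ≠ x → x ∈ B := Iff.rfl

theorem swap_supp_subset {a b : ℕ} :
    {x | Equiv.swap a b x ≠ x} ⊆ {a, b} := by
  intro x hx
  by_contra h
  simp only [Set.mem_insert_iff, Set.mem_singleton_iff, not_or] at h
  exact hx (Equiv.swap_apply_of_ne_of_ne h.1 h.2)

theorem swap_mem_Splus {B : Set ℕ} {a b : ℕ} (ha : a ∈ B) (hb : b ∈ B) :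
    Equiv.swap a b ∈ Splus B := by
  refine ⟨Set.Finite.subset (by simp : ({a, b} : Set ℕ).Finite)
    swap_supp_subset, fun x hx => ?_⟩
  rcases swap_supp_subset hx with rfl | rfl
  · exact ha
  · exact hb

/-- The subgroup of permutations preserving each block (pointwise iff condition). -/
def Pgrp (pos neg : Set (Set ℕ)) : Subgroup (Equiv.Perm ℕ) where
  carrier := {g | ∀ C ∈ pos ∪ neg, ∀ x, x ∈ C ↔ g x ∈ C}
  one_mem' := by intro C _ x; rfl
  mul_mem' := by
    intro a b ha hb C hC x
    exact (hb C hC x).trans (ha C hC (b x))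
  inv_mem' := by
    intro a ha C hC x
    have := ha C hC (a⁻¹ x)
    simpa using this.symm

theorem Sminus_le_Splus (B : Set ℕ) : Sminus B ≤ Splus B := by
  rw [Sminus, Subgroup.closure_le]
  rintro g ⟨a, b, c, d, ha, hb, hc, hd, -, -, rfl⟩
  exact mul_mem (swap_mem_Splus ha hb) (swap_mem_Splus hc hd)

theorem Splus_le_Pgrp {pos neg : Set (Set ℕ)}
    (hdisj : (pos ∪ neg).Pairwise Disjoint) {B : Set ℕ} (hB : B ∈ pos ∪ neg) :
    Splus B ≤ Pgrp pos neg := by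
  intro y hy C hC x
  by_cases hyx : y x = x
  · rw [hyx]
  · have hxB : x ∈ B := hy.2 x hyx
    have hyxB : y x ∈ B := by
      have h' : y⁻¹ (y x) ≠ y x := by simpa using Ne.symm hyx
      exact (inv_mem hy : y⁻¹ ∈ Splus B).2 (y x) h'
    rcases eq_or_ne B C with rfl | hne
    · exact iff_of_true hxB hyxB
    · have hd := hdisj hB hC hne
      exact iff_of_false (fun h => Set.disjoint_left.mp hd hxB h)
        (fun h => Set.disjoint_left.mp hd hyxB h)

theorem Y_le_Pgrp {pos neg : Set (Set ℕ)}
    (hdisj : (pos ∪ neg).Pairwise Disjoint) :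
    Yyoung pos neg ≤ Pgrp pos neg := by
  refine sup_le (iSup₂_le fun B hB => ?_) (iSup₂_le fun B hB => ?_)
  · exact Splus_le_Pgrp hdisj (Or.inl hB)
  · exact (Sminus_le_Splus B).trans (Splus_le_Pgrp hdisj (Or.inr hB))

theorem conj_swap (g : Equiv.Perm ℕ) (a b : ℕ) :
    g * Equiv.swap a b * g⁻¹ = Equiv.swap (g a) (g b) :=
  (Equiv.swap_apply_apply g a b).symm

theorem conj_Y {pos neg : Set (Set ℕ)} {g : Equiv.Perm ℕ}
    (hgB : ∀ B ∈ pos ∪ neg, g '' B = B) :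
    ∀ h ∈ Yyoung pos neg, g * h * g⁻¹ ∈ Yyoung pos neg := by
  have key : Yyoung pos neg ≤
      Subgroup.comap (MulAut.conj g).toMonoidHom (Yyoung pos neg) := by
    refine sup_le (iSup₂_le fun B hB => ?_) (iSup₂_le fun B hB => ?_)
    · intro σ hσ
      have hmem : g * σ * g⁻¹ ∈ Splus B := by
        constructor
        · refine Set.Finite.subset (hσ.1.image g) ?_
          intro x hx
          have hx' : σ (g⁻¹ x) ≠ g⁻¹ x := by
            intro h
            apply hx
            rw [Equiv.Perm.mul_apply, Equiv.Perm.mul_apply, h]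
            simp
          exact ⟨g⁻¹ x, hx', by simp⟩
        · intro x hx
          have hx' : σ (g⁻¹ x) ≠ g⁻¹ x := by
            intro h
            apply hx
            rw [Equiv.Perm.mul_apply, Equiv.Perm.mul_apply, h]
            simp
          have : g⁻¹ x ∈ B := hσ.2 _ hx'
          have : g (g⁻¹ x) ∈ g '' B := ⟨_, this, rfl⟩
          rw [hgB B (Or.inl hB)] at this
          simpa using this
      show (MulAut.conj g) σ ∈ Yyoung pos neg
      have : g * σ * g⁻¹ ∈ Yyoung pos neg :=
        Subgroup.mem_sup_left <|
          (le_iSup₂_of_le B hB le_rfl : Splus B ≤ ⨆ B ∈ pos, Splus B) hmem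
      simpa using this
    · intro σ hσ
      have hmem : g * σ * g⁻¹ ∈ Sminus B := by
        have : σ ∈ Sminus B := hσ
        have hle : Sminus B ≤
            Subgroup.comap (MulAut.conj g).toMonoidHom (Sminus B) := by
          rw [Sminus, Subgroup.closure_le]
          rintro x ⟨a, b, c, d, ha, hb, hc, hd, hab, hcd, rfl⟩
          have hBim := hgB B (Or.inr hB)
          have hmem' : ∀ y ∈ B, g y ∈ B := fun y hy => hBim ▸ ⟨y, hy, rfl⟩
          show (MulAut.conj g) _ ∈ Sminus B
          refine Subgroup.subset_closure
            ⟨g a, g b, g c, g d, hmem' a ha, hmem' b hb, hmem' c hc, hmem' d hd,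
              fun h => hab (g.injective h), fun h => hcd (g.injective h), ?_⟩
          simp only [MulAut.conj_apply, mul_assoc]
          rw [show g * (Equiv.swap a b * (Equiv.swap c d * g⁻¹)) =
            (g * Equiv.swap a b * g⁻¹) * (g * Equiv.swap c d * g⁻¹) by group,
            conj_swap, conj_swap]
        simpa using hle this
      show (MulAut.conj g) σ ∈ Yyoung pos neg
      have : g * σ * g⁻¹ ∈ Yyoung pos neg :=
        Subgroup.mem_sup_right <|
          (le_iSup₂_of_le B hB le_rfl : Sminus B ≤ ⨆ B ∈ neg, Sminus B) hmem
      simpa using this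
  intro h hh
  have := key hh
  simpa [Subgroup.mem_comap] using this

theorem perm_image_eq {g : Equiv.Perm ℕ} {B : Set ℕ}
    (h1 : ∀ x ∈ B, g x ∈ B) (h2 : ∀ x ∈ B, g⁻¹ x ∈ B) : g '' B = B := by
  ext x
  constructor
  · rintro ⟨y, hy, rfl⟩
    exact h1 y hy
  · intro hx
    exact ⟨g⁻¹ x, h2 x hx, by simp⟩

theorem perm_inv_image {g : Equiv.Perm ℕ} {B : Set ℕ} (h : g '' B = B) :
    ⇑g⁻¹ '' B = B := by
  ext x
  constructor
  · rintro ⟨y, hy, rfl⟩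
    rw [← h] at hy
    obtain ⟨z, hz, rfl⟩ := hy
    simpa using hz
  · intro hx
    refine ⟨g x, ?_, by simp⟩
    rw [← h]
    exact ⟨x, hx, rfl⟩

theorem image_eq_of_iff {g : Equiv.Perm ℕ} {B : Set ℕ}
    (h : ∀ x, x ∈ B ↔ g x ∈ B) : g '' B = B := by
  refine perm_image_eq (fun x hx => (h x).mp hx) (fun x hx => ?_)
  have := h (g⁻¹ x)
  simp only [Equiv.Perm.inv_def, Equiv.apply_symm_apply] at this
  exact this.mpr hx

theorem oneside {pos neg : Set (Set ℕ)} (hdisj : (pos ∪ neg).Pairwise Disjoint)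
    (hinf : ∀ B ∈ pos ∪ neg, B.Infinite) {g : Equiv.Perm ℕ} (hgSN : g ∈ SN)
    (hg : ∀ h ∈ Yyoung pos neg, g * h * g⁻¹ ∈ Yyoung pos neg) :
    ∀ B ∈ pos ∪ neg, ∀ a ∈ B, g a ∈ B := by
  intro B hB a ha
  by_contra hu
  have hfin : ({x | g x ≠ x} ∪ {a, g a}).Finite :=
    hgSN.1.union ((Set.finite_singleton (g a)).insert a)
  have hD : (B \ ({x | g x ≠ x} ∪ {a, g a})).Infinite := (hinf B hB).diff hfin
  obtain ⟨b, hb⟩ := hD.nonempty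
  obtain ⟨c, hc'⟩ := (hD.diff (Set.finite_singleton b)).nonempty
  have hc := hc'.1
  have hcb : c ≠ b := hc'.2
  have hbB : b ∈ B := hb.1
  have hcB : c ∈ B := hc.1
  have hgb : g b = b := by
    by_contra h
    exact hb.2 (Or.inl h)
  have hgc : g c = c := by
    by_contra h
    exact hc.2 (Or.inl h)
  have hab : a ≠ b := fun h => hb.2 (Or.inr (Or.inl h.symm))
  have hbc : b ≠ c := hcb.symm
  rcases hB with hB' | hB'
  · -- positive block : conjugate a transposition
    have hswap : Equiv.swap a b ∈ Yyoung pos neg :=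
      Subgroup.mem_sup_left <|
        (le_iSup₂_of_le B hB' le_rfl : Splus B ≤ ⨆ C ∈ pos, Splus C)
          (swap_mem_Splus ha hbB)
    have hy : Equiv.swap (g a) b ∈ Yyoung pos neg := by
      have := hg _ hswap
      rwa [conj_swap, hgb] at this
    have := (Y_le_Pgrp hdisj hy) B (Or.inl hB') b
    rw [Equiv.swap_apply_right] at this
    exact hu (this.mp hbB)
  · -- negative block : conjugate a 3-cycle
    have hmem : Equiv.swap a b * Equiv.swap b c ∈ Yyoung pos neg :=
      Subgroup.mem_sup_right <|
        (le_iSup₂_of_le B hB' le_rfl : Sminus B ≤ ⨆ C ∈ neg, Sminus C)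
          (Subgroup.subset_closure ⟨a, b, b, c, ha, hbB, hbB, hcB, hab, hbc, rfl⟩)
    have hy : Equiv.swap (g a) b * Equiv.swap b c ∈ Yyoung pos neg := by
      have h2 := hg _ hmem
      rw [show g * (Equiv.swap a b * Equiv.swap b c) * g⁻¹ =
        (g * Equiv.swap a b * g⁻¹) * (g * Equiv.swap b c * g⁻¹) by group,
        conj_swap, conj_swap, hgb, hgc] at h2
      exact h2
    have := (Y_le_Pgrp hdisj hy) B (Or.inr hB') c
    rw [Equiv.Perm.mul_apply, Equiv.swap_apply_right, Equiv.swap_apply_right]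
      at this
    exact hu (this.mp hcB)

/-- For a signed partition `η` of `ℕ` all of whose positive and negative blocks are
infinite, the normalizer in `S_ℕ` of the signed Young subgroup `Y_η` is the
"unsigned" Young subgroup of all finitely supported permutations preserving each
block setwise; consequently this normalizer is self-normalizing in `S_ℕ`:
`N(N(Y_η)) = N(Y_η)`. -/
theorem stmt13 (pos neg : Set (Set ℕ))
    (hdisj : (pos ∪ neg).Pairwise Disjoint) (hpn : Disjoint pos neg)
    (hinf : ∀ B ∈ pos ∪ neg, B.Infinite) :
    (∀ g ∈ SN, (g ∈ Subgroup.normalizer (Yyoung pos neg : Set (Equiv.Perm ℕ)) ↔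
        ∀ B ∈ pos ∪ neg, g '' B = B)) ∧
    (∀ g ∈ SN, (g ∈ Subgroup.normalizer
        ((Subgroup.normalizer (Yyoung pos neg : Set (Equiv.Perm ℕ)) ⊓ SN : Subgroup (Equiv.Perm ℕ)) :
          Set (Equiv.Perm ℕ)) ↔
        g ∈ Subgroup.normalizer (Yyoung pos neg : Set (Equiv.Perm ℕ)) ⊓ SN)) := by
  have part1 : ∀ g ∈ SN, (g ∈ Subgroup.normalizer (Yyoung pos neg : Set (Equiv.Perm ℕ)) ↔
      ∀ B ∈ pos ∪ neg, g '' B = B) := by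
    intro g hgSN
    constructor
    · intro hg
      have hg' : ∀ h ∈ Yyoung pos neg, g * h * g⁻¹ ∈ Yyoung pos neg :=
        fun h hh => (Subgroup.mem_normalizer_iff.mp hg h).mp hh
      have hginv : g⁻¹ ∈ Subgroup.normalizer (Yyoung pos neg : Set (Equiv.Perm ℕ)) := inv_mem hg
      have hginv' : ∀ h ∈ Yyoung pos neg, g⁻¹ * h * g⁻¹⁻¹ ∈ Yyoung pos neg :=
        fun h hh => (Subgroup.mem_normalizer_iff.mp hginv h).mp hh
      intro B hB
      exact perm_image_eq (oneside hdisj hinf hgSN hg' B hB)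
        (oneside hdisj hinf (inv_mem hgSN) hginv' B hB)
    · intro hblocks
      have hinvblocks : ∀ B ∈ pos ∪ neg, ⇑g⁻¹ '' B = B :=
        fun B hB => perm_inv_image (hblocks B hB)
      rw [Subgroup.mem_normalizer_iff]
      intro h
      constructor
      · exact fun hh => conj_Y hblocks h hh
      · intro hh
        have := conj_Y hinvblocks _ hh
        rwa [show g⁻¹ * (g * h * g⁻¹) * g⁻¹⁻¹ = h by group] at this
  refine ⟨part1, ?_⟩
  intro g hgSN
  constructor
  · intro hg
    have key : ∀ (k : Equiv.Perm ℕ), k ∈ SN →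
        (∀ n ∈ Subgroup.normalizer (Yyoung pos neg : Set (Equiv.Perm ℕ)) ⊓ SN,
          k * n * k⁻¹ ∈ Subgroup.normalizer (Yyoung pos neg : Set (Equiv.Perm ℕ)) ⊓ SN) →
        ∀ B ∈ pos ∪ neg, ∀ a ∈ B, k a ∈ B := by
      intro k hkSN hk B hB a ha
      by_contra hu
      have hfin : ({x | k x ≠ x} ∪ {a, k a}).Finite :=
        hkSN.1.union ((Set.finite_singleton (k a)).insert a)
      have hD : (B \ ({x | k x ≠ x} ∪ {a, k a})).Infinite :=
        (hinf B hB).diff hfin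
      obtain ⟨b, hb⟩ := hD.nonempty
      have hbB : b ∈ B := hb.1
      have hkb : k b = b := by
        by_contra h
        exact hb.2 (Or.inl h)
      have hswapSN : Equiv.swap a b ∈ SN :=
        swap_mem_Splus (Set.mem_univ a) (Set.mem_univ b)
      have hswap_blocks : ∀ C ∈ pos ∪ neg, Equiv.swap a b '' C = C := by
        intro C hC
        apply image_eq_of_iff
        intro x
        have habC : (a ∈ C ↔ b ∈ C) := by
          rcases eq_or_ne B C with rfl | hne
          · exact iff_of_true ha hbB
          · have hd := hdisj hB hC hne
            exact iff_of_false (fun h => Set.disjoint_left.mp hd ha h)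
              (fun h => Set.disjoint_left.mp hd hbB h)
        rcases eq_or_ne x a with rfl | hxa
        · rw [Equiv.swap_apply_left]
          exact habC
        rcases eq_or_ne x b with rfl | hxb
        · rw [Equiv.swap_apply_right]
          exact habC.symm
        · rw [Equiv.swap_apply_of_ne_of_ne hxa hxb]
      have hswapN : Equiv.swap a b ∈ Subgroup.normalizer (Yyoung pos neg : Set (Equiv.Perm ℕ)) ⊓ SN :=
        ⟨(part1 _ hswapSN).mpr hswap_blocks, hswapSN⟩
      have hconj : Equiv.swap (k a) b ∈ Subgroup.normalizer (Yyoung pos neg : Set (Equiv.Perm ℕ)) ⊓ SN := by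
        have := hk _ hswapN
        rwa [conj_swap, hkb] at this
      have himg := (part1 _ hconj.2).mp hconj.1 B hB
      have : Equiv.swap (k a) b b ∈ B := himg ▸ ⟨b, hbB, rfl⟩
      rw [Equiv.swap_apply_right] at this
      exact hu this
    have hg' : ∀ n ∈ Subgroup.normalizer (Yyoung pos neg : Set (Equiv.Perm ℕ)) ⊓ SN,
        g * n * g⁻¹ ∈ Subgroup.normalizer (Yyoung pos neg : Set (Equiv.Perm ℕ)) ⊓ SN :=
      fun n hn => (Subgroup.mem_normalizer_iff.mp hg n).mp hn
    have hginv : g⁻¹ ∈ Subgroup.normalizer ((Subgroup.normalizer (Yyoung pos neg : Set (Equiv.Perm ℕ)) ⊓ SN : Subgroup (Equiv.Perm ℕ)) : Set (Equiv.Perm ℕ)) :=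
      inv_mem hg
    have hginv' : ∀ n ∈ Subgroup.normalizer (Yyoung pos neg : Set (Equiv.Perm ℕ)) ⊓ SN,
        g⁻¹ * n * g⁻¹⁻¹ ∈ Subgroup.normalizer (Yyoung pos neg : Set (Equiv.Perm ℕ)) ⊓ SN :=
      fun n hn => (Subgroup.mem_normalizer_iff.mp hginv n).mp hn
    refine ⟨(part1 g hgSN).mpr ?_, hgSN⟩
    intro B hB
    exact perm_image_eq (key g hgSN hg' B hB)
      (key g⁻¹ (inv_mem hgSN) hginv' B hB)
  · intro hg
    exact Subgroup.le_normalizer hg
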